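/- Let q₁, q₂, q₃ be radial functions on (0,∞), and let 1 ≤ p, p₁, p₂, p₃ ≤ ∞ satisfy 1/p = 1/p₁ + 1/p₂ + 1/p₃ with 1/p ≤ 1 and 1/s := 1/p₂ + 1/p₃ > 0. Then ‖q₁(r) ∫_r^∞ |q₂(ρ)||q₃(ρ)| dρ/ρ‖_{L^p} ≤ C ‖q₁‖_{L^{p₁}} ‖q₂‖_{L^{p₂}} ‖q₃‖_{L^{p₃}}, where all norms are with respect to the measure r dr on (0,∞). -/

import Mathlib

open MeasureTheory Set
open scoped ENNReal

lemma integral_eq_toReal {μ : Measure ℝ} {f : ℝ → ℝ} (hf : AEStronglyMeasurable f μ)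
    (h0 : 0 ≤ᵐ[μ] f) :
    ∫ x, f x ∂μ = (∫⁻ x, ENNReal.ofReal (f x) ∂μ).toReal := by
  by_cases hi : Integrable f μ
  · exact integral_eq_lintegral_of_nonneg_ae h0 hf
  · rw [integral_undef hi]
    have : ∫⁻ x, ENNReal.ofReal (f x) ∂μ = ∞ := by
      by_contra h
      exact hi ⟨hf, (hasFiniteIntegral_iff_ofReal h0).2 (lt_top_iff_ne_top.2 h)⟩
    simp [this]

lemma lp_holder {α : Type*} {m : MeasurableSpace α} (μ : Measure α) {f g : α → ℝ≥0∞}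
    (hf : AEMeasurable f μ) (hg : AEMeasurable g μ) {w u v : ℝ}
    (hw : 0 < w) (hu : w < u) (hv : 0 < v) (h : 1/w = 1/u + 1/v) :
    (∫⁻ x, (f x * g x) ^ w ∂μ) ^ (1/w) ≤
      (∫⁻ x, f x ^ u ∂μ) ^ (1/u) * (∫⁻ x, g x ^ v ∂μ) ^ (1/v) := by
  have hu0 : 0 < u := hw.trans hu
  have conj : (u/w).HolderConjugate (v/w) := by
    rw [Real.holderConjugate_iff]; constructor
    · rw [lt_div_iff₀ hw]; linarith
    · rw [inv_div, inv_div, div_add_div _ _ (ne_of_gt hu0) (ne_of_gt hv)]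
      rw [div_eq_one_iff_eq (by positivity)]
      field_simp at h
      linarith [h]
  have key := ENNReal.lintegral_mul_le_Lp_mul_Lq μ conj
    (hf.pow_const w) (hg.pow_const w)
  have e1 : ∀ x, (f x * g x) ^ w = (f x ^ w) * (g x ^ w) := fun x =>
    ENNReal.mul_rpow_of_nonneg _ _ hw.le
  have e2 : ∀ x, (f x ^ w) ^ (u/w) = f x ^ u := fun x => by
    rw [← ENNReal.rpow_mul]; congr 1; field_simp
  have e3 : ∀ x, (g x ^ w) ^ (v/w) = g x ^ v := fun x => by
    rw [← ENNReal.rpow_mul]; congr 1; field_simp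
  simp only [e2, e3] at key
  calc (∫⁻ x, (f x * g x) ^ w ∂μ) ^ (1/w)
      = (∫⁻ x, f x ^ w * g x ^ w ∂μ) ^ (1/w) := by simp only [e1]
    _ ≤ (((∫⁻ x, f x ^ u ∂μ) ^ (1/(u/w))) * ((∫⁻ x, g x ^ v ∂μ) ^ (1/(v/w)))) ^ (1/w) :=
        ENNReal.rpow_le_rpow key (by positivity)
    _ = (∫⁻ x, f x ^ u ∂μ) ^ (1/u) * (∫⁻ x, g x ^ v ∂μ) ^ (1/v) := by
        rw [ENNReal.mul_rpow_of_nonneg _ _ (by positivity : (0:ℝ) ≤ 1/w),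
          ← ENNReal.rpow_mul, ← ENNReal.rpow_mul]
        congr 1 <;> · congr 1; field_simp

lemma tonelli_aux {F : ℝ → ℝ≥0∞} (hF : Measurable F) :
    ∫⁻ r in Ioi (0:ℝ), ∫⁻ ρ in Ioi r, F ρ = ∫⁻ ρ in Ioi (0:ℝ), F ρ * ENNReal.ofReal ρ := by
  have hmeas : Measurable (fun q : ℝ × ℝ => if q.1 < q.2 then F q.2 else 0) :=
    Measurable.ite (measurableSet_lt measurable_fst measurable_snd)
      (hF.comp measurable_snd) measurable_const
  have step1 : ∫⁻ r in Ioi (0:ℝ), ∫⁻ ρ in Ioi r, F ρ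
      = ∫⁻ r in Ioi (0:ℝ), ∫⁻ ρ in Ioi (0:ℝ), (if r < ρ then F ρ else 0) := by
    refine setLIntegral_congr_fun measurableSet_Ioi (fun r hr => ?_)
    have hsub : Ioi r ⊆ Ioi (0:ℝ) := Ioi_subset_Ioi (le_of_lt hr)
    rw [← lintegral_indicator measurableSet_Ioi,
        ← lintegral_indicator measurableSet_Ioi]
    congr 1
    ext ρ
    by_cases h : r < ρ
    · simp [indicator_apply, mem_Ioi, h, lt_trans hr h]
    · simp [indicator_apply, mem_Ioi, h]
  rw [step1, lintegral_lintegral_swap (hmeas.aemeasurable)]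
  refine setLIntegral_congr_fun measurableSet_Ioi (fun ρ hρ => ?_)
  have e : (fun r => if r < ρ then F ρ else 0) = (Iio ρ).indicator (fun _ => F ρ) := by
    ext r; by_cases h : r < ρ <;> simp [indicator_apply, mem_Iio, h]
  rw [e, lintegral_indicator measurableSet_Iio, setLIntegral_const,
      Measure.restrict_apply measurableSet_Iio]
  have e2 : Iio ρ ∩ Ioi (0:ℝ) = Ioo 0 ρ := by ext x; simp [mem_Ioo, and_comm]
  rw [e2, Real.volume_Ioo, sub_zero]

lemma hardy_aux {s : ℝ} (hs : 1 < s) {H : ℝ → ℝ≥0∞} (hH : Measurable H) :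
    ∫⁻ r in Ioi (0:ℝ), (∫⁻ ρ in Ioi r, H ρ * (ENNReal.ofReal ρ)⁻¹) ^ s * ENNReal.ofReal r
      ≤ ENNReal.ofReal ((s-1) ^ (s-1)) * ∫⁻ ρ in Ioi (0:ℝ), H ρ ^ s * ENNReal.ofReal ρ := by
  set s' : ℝ := s / (s - 1) with hs'def
  have hs1 : 0 < s - 1 := by linarith
  have hs0 : 0 < s := by linarith
  have hs'1 : 1 < s' := by rw [hs'def, lt_div_iff₀ hs1]; linarith
  have hs'0 : 0 < s' := by linarith
  have conj : s.HolderConjugate s' := by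
    rw [Real.holderConjugate_iff]; constructor
    · exact hs
    · rw [hs'def]; field_simp; ring
  have hs'm1 : s' - 1 = 1 / (s - 1) := by rw [hs'def]; field_simp; ring
  have hss' : (1 - s') * (1 / s') = -(1/s) := by
    rw [hs'def]; field_simp; ring
  have hss2 : s / s' = s - 1 := by rw [hs'def]; field_simp
  set A : ℝ → ℝ≥0∞ := fun r => ∫⁻ ρ in Ioi r, H ρ ^ s with hA
  have key : ∀ r : ℝ, 0 < r →
      (∫⁻ ρ in Ioi r, H ρ * (ENNReal.ofReal ρ)⁻¹) ^ s * ENNReal.ofReal r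
        ≤ ENNReal.ofReal ((s-1) ^ (s-1)) * A r := by
    intro r hr
    have hmg : Measurable (fun ρ : ℝ => (ENNReal.ofReal ρ)⁻¹) :=
      (ENNReal.measurable_ofReal.comp measurable_id).inv
    have holder := ENNReal.lintegral_mul_le_Lp_mul_Lq (volume.restrict (Ioi r)) conj
      hH.aemeasurable hmg.aemeasurable
    have hE : ∫⁻ ρ in Ioi r, ((ENNReal.ofReal ρ)⁻¹) ^ s'
        = ENNReal.ofReal (r ^ (1 - s') * (s - 1)) := by
      have congr1 : ∫⁻ ρ in Ioi r, ((ENNReal.ofReal ρ)⁻¹) ^ s'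
          = ∫⁻ ρ in Ioi r, ENNReal.ofReal (ρ ^ (-s')) := by
        refine setLIntegral_congr_fun measurableSet_Ioi (fun ρ hρ => ?_)
        have hρ0 : 0 < ρ := lt_trans hr hρ
        rw [← ENNReal.ofReal_inv_of_pos hρ0,
            ENNReal.ofReal_rpow_of_nonneg (by positivity) hs'0.le,
            Real.inv_rpow hρ0.le, ← Real.rpow_neg hρ0.le]
      rw [congr1, ← ofReal_integral_eq_lintegral_ofReal
          (integrableOn_Ioi_rpow_of_lt (by linarith) hr)
          ((ae_restrict_mem measurableSet_Ioi).mono fun ρ hρ =>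
            Real.rpow_nonneg (le_of_lt (lt_trans hr hρ)) _)]
      rw [integral_Ioi_rpow_of_lt (by linarith) hr]
      have harith : ∀ x : ℝ, -x / (-s' + 1) = x * (s-1) := by
        intro x
        rw [show -s' + 1 = -(s'-1) by ring, hs'm1]
        field_simp
      rw [harith]
      congr 2
      ring
    have hEpow : (∫⁻ ρ in Ioi r, ((ENNReal.ofReal ρ)⁻¹) ^ s') ^ (1/s')
        = ENNReal.ofReal (r ^ (-(1/s)) * (s - 1) ^ (1/s')) := by
      rw [hE, ENNReal.ofReal_rpow_of_nonneg (by positivity) (by positivity)]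
      congr 1
      rw [Real.mul_rpow (by positivity) hs1.le, ← Real.rpow_mul hr.le, hss']
    have holder2 : (∫⁻ ρ in Ioi r, H ρ * (ENNReal.ofReal ρ)⁻¹)
        ≤ A r ^ (1/s) * ENNReal.ofReal (r ^ (-(1/s)) * (s - 1) ^ (1/s')) := by
      rw [← hEpow]
      exact holder
    calc (∫⁻ ρ in Ioi r, H ρ * (ENNReal.ofReal ρ)⁻¹) ^ s * ENNReal.ofReal r
        ≤ (A r ^ (1/s) * ENNReal.ofReal (r ^ (-(1/s)) * (s - 1) ^ (1/s'))) ^ s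
            * ENNReal.ofReal r :=
          mul_le_mul_left (ENNReal.rpow_le_rpow holder2 hs0.le) _
      _ = A r * (ENNReal.ofReal (r⁻¹ * (s-1) ^ (s-1)) * ENNReal.ofReal r) := by
          rw [ENNReal.mul_rpow_of_nonneg _ _ hs0.le, ← ENNReal.rpow_mul,
            one_div, inv_mul_cancel₀ (ne_of_gt hs0), ENNReal.rpow_one, mul_assoc]
          congr 2
          rw [ENNReal.ofReal_rpow_of_nonneg (by positivity) hs0.le]
          congr 1
          rw [Real.mul_rpow (by positivity) (by positivity), ← Real.rpow_mul hr.le,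
            show -s⁻¹ * s = -1 by field_simp, Real.rpow_neg_one,
            ← Real.rpow_mul hs1.le, show 1/s' * s = s/s' by ring, hss2]
      _ = ENNReal.ofReal ((s-1) ^ (s-1)) * A r := by
          rw [← ENNReal.ofReal_mul (by positivity)]
          rw [show r⁻¹ * (s-1)^(s-1) * r = (s-1)^(s-1) by field_simp]
          ring
  calc ∫⁻ r in Ioi (0:ℝ), (∫⁻ ρ in Ioi r, H ρ * (ENNReal.ofReal ρ)⁻¹) ^ s * ENNReal.ofReal r
      ≤ ∫⁻ r in Ioi (0:ℝ), ENNReal.ofReal ((s-1) ^ (s-1)) * A r :=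
        lintegral_mono_ae ((ae_restrict_mem measurableSet_Ioi).mono fun r hr => key r hr)
    _ = ENNReal.ofReal ((s-1) ^ (s-1)) * ∫⁻ r in Ioi (0:ℝ), A r :=
        lintegral_const_mul' _ _ ENNReal.ofReal_ne_top
    _ = ENNReal.ofReal ((s-1) ^ (s-1)) * ∫⁻ ρ in Ioi (0:ℝ), H ρ ^ s * ENNReal.ofReal ρ := by
        rw [hA, tonelli_aux (hH.pow_const s)]

theorem stmt3 (p p₁ p₂ p₃ : ℝ) (hp : 1 ≤ p) (h1 : 1 ≤ p₁) (h2 : 1 ≤ p₂) (h3 : 1 ≤ p₃)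
    (hrel : 1/p = 1/p₁ + 1/p₂ + 1/p₃) (hs : 0 < 1/p₂ + 1/p₃) :
    ∃ C > 0, ∀ q₁ q₂ q₃ : ℝ → ℝ,
      Measurable q₁ → Measurable q₂ → Measurable q₃ →
      IntegrableOn (fun r => |q₁ r| ^ p₁ * r) (Set.Ioi 0) →
      IntegrableOn (fun r => |q₂ r| ^ p₂ * r) (Set.Ioi 0) →
      IntegrableOn (fun r => |q₃ r| ^ p₃ * r) (Set.Ioi 0) →
      (∫ r in Set.Ioi (0:ℝ),
          |q₁ r * ∫ ρ in Set.Ioi r, |q₂ ρ| * |q₃ ρ| / ρ| ^ p * r) ^ (1/p) ≤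
        C * (∫ r in Set.Ioi (0:ℝ), |q₁ r| ^ p₁ * r) ^ (1/p₁) *
            (∫ r in Set.Ioi (0:ℝ), |q₂ r| ^ p₂ * r) ^ (1/p₂) *
            (∫ r in Set.Ioi (0:ℝ), |q₃ r| ^ p₃ * r) ^ (1/p₃) := by
  -- exponent bookkeeping
  have hp0 : 0 < p := lt_of_lt_of_le one_pos hp
  have hp₁0 : 0 < p₁ := lt_of_lt_of_le one_pos h1
  have hp₂0 : 0 < p₂ := lt_of_lt_of_le one_pos h2
  have hp₃0 : 0 < p₃ := lt_of_lt_of_le one_pos h3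
  set s : ℝ := (1/p₂ + 1/p₃)⁻¹ with hsdef
  have hs_pos : 0 < s := inv_pos.2 hs
  have hs_inv : 1/s = 1/p₂ + 1/p₃ := by rw [hsdef, one_div, inv_inv]
  have hp_le1 : 1/p ≤ 1 := by rw [div_le_one hp0]; exact hp
  have h1p₁ : 0 < 1/p₁ := by positivity
  have hs_lt1 : 1/p₂ + 1/p₃ < 1 := by linarith
  have hs1 : 1 < s := by
    have hst : (1/p₂ + 1/p₃) * s = 1 := mul_inv_cancel₀ (ne_of_gt hs)
    nlinarith
  have hrel' : 1/p = 1/p₁ + 1/s := by rw [hs_inv]; linarith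
  have hpp₁ : p < p₁ := by
    have hinv : 1/p₁ < 1/p := by
      have : 0 < 1/s := by positivity
      linarith
    exact lt_of_one_div_lt_one_div hp₁0 hinv
  have hsp₂ : s < p₂ := by
    have hinv : 1/p₂ < 1/s := by
      rw [hs_inv]
      have h3' : 0 < 1/p₃ := by positivity
      linarith
    exact lt_of_one_div_lt_one_div hp₂0 hinv
  have h13 : 1/s = 1/p₂ + 1/p₃ := hs_inv
  have hs1' : 0 < s - 1 := by linarith
  refine ⟨((s-1) ^ (s-1)) ^ (1/s),
    Real.rpow_pos_of_pos (Real.rpow_pos_of_pos hs1' _) _, ?_⟩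
  set C : ℝ := ((s-1) ^ (s-1)) ^ (1/s) with hCdef
  have hC : 0 < C := Real.rpow_pos_of_pos (Real.rpow_pos_of_pos hs1' _) _
  intro q₁ q₂ q₃ hm1 hm2 hm3 hi1 hi2 hi3
  -- ENNReal versions
  set Q₁ : ℝ → ℝ≥0∞ := fun r => ENNReal.ofReal |q₁ r| with hQ₁def
  set Q₂ : ℝ → ℝ≥0∞ := fun r => ENNReal.ofReal |q₂ r| with hQ₂def
  set Q₃ : ℝ → ℝ≥0∞ := fun r => ENNReal.ofReal |q₃ r| with hQ₃def
  have hQ₁ : Measurable Q₁ := hm1.abs.ennreal_ofReal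
  have hQ₂ : Measurable Q₂ := hm2.abs.ennreal_ofReal
  have hQ₃ : Measurable Q₃ := hm3.abs.ennreal_ofReal
  set G : ℝ → ℝ≥0∞ := fun r => ∫⁻ ρ in Ioi r, Q₂ ρ * Q₃ ρ * (ENNReal.ofReal ρ)⁻¹ with hGdef
  have hGanti : Antitone G := fun a b hab =>
    lintegral_mono' (Measure.restrict_mono (Ioi_subset_Ioi hab) le_rfl) le_rfl
  have hGmeas : Measurable G := hGanti.measurable
  set μw : Measure ℝ := (volume.restrict (Ioi (0:ℝ))).withDensity
    (fun r => ENNReal.ofReal r) with hμwdef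
  have hconv : ∀ f : ℝ → ℝ≥0∞, Measurable f →
      ∫⁻ x, f x ∂μw = ∫⁻ r in Ioi (0:ℝ), f r * ENNReal.ofReal r := by
    intro f hf
    rw [hμwdef, lintegral_withDensity_eq_lintegral_mul _ ENNReal.measurable_ofReal hf]
    exact lintegral_congr fun x => mul_comm _ _
  set L1 : ℝ≥0∞ := ∫⁻ r in Ioi (0:ℝ), Q₁ r ^ p₁ * ENNReal.ofReal r with hL1def
  set L2 : ℝ≥0∞ := ∫⁻ r in Ioi (0:ℝ), Q₂ r ^ p₂ * ENNReal.ofReal r with hL2def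
  set L3 : ℝ≥0∞ := ∫⁻ r in Ioi (0:ℝ), Q₃ r ^ p₃ * ENNReal.ofReal r with hL3def
  set L : ℝ≥0∞ := ∫⁻ r in Ioi (0:ℝ), (Q₁ r * G r) ^ p * ENNReal.ofReal r with hLdef
  set M : ℝ≥0∞ := ∫⁻ r in Ioi (0:ℝ), (Q₂ r * Q₃ r) ^ s * ENNReal.ofReal r with hMdef
  set GS : ℝ≥0∞ := ∫⁻ r in Ioi (0:ℝ), G r ^ s * ENNReal.ofReal r with hGSdef
  -- Step 1: outer Hölder
  have step1 : L ^ (1/p) ≤ L1 ^ (1/p₁) * GS ^ (1/s) := by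
    have h := lp_holder μw hQ₁.aemeasurable hGmeas.aemeasurable hp0 hpp₁ hs_pos hrel'
    rwa [hconv (fun x => (Q₁ x * G x) ^ p) ((hQ₁.mul hGmeas).pow_const p), hconv _ (hQ₁.pow_const p₁),
      hconv _ (hGmeas.pow_const s)] at h
  -- Step 2: Hardy
  have step2 : GS ≤ ENNReal.ofReal ((s-1) ^ (s-1)) * M :=
    hardy_aux hs1 (hQ₂.mul hQ₃)
  have step2' : GS ^ (1/s) ≤ ENNReal.ofReal C * M ^ (1/s) := by
    calc GS ^ (1/s) ≤ (ENNReal.ofReal ((s-1) ^ (s-1)) * M) ^ (1/s) :=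
          ENNReal.rpow_le_rpow step2 (by positivity)
      _ = ENNReal.ofReal C * M ^ (1/s) := by
          rw [ENNReal.mul_rpow_of_nonneg _ _ (by positivity : (0:ℝ) ≤ 1/s),
            ENNReal.ofReal_rpow_of_nonneg (Real.rpow_nonneg hs1'.le _) (by positivity), hCdef]
  -- Step 3: inner Hölder
  have step3 : M ^ (1/s) ≤ L2 ^ (1/p₂) * L3 ^ (1/p₃) := by
    have h := lp_holder μw hQ₂.aemeasurable hQ₃.aemeasurable hs_pos hsp₂ hp₃0 h13
    rwa [hconv (fun x => (Q₂ x * Q₃ x) ^ s) ((hQ₂.mul hQ₃).pow_const s), hconv _ (hQ₂.pow_const p₂),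
      hconv _ (hQ₃.pow_const p₃)] at h
  -- combined ENNReal estimate
  have main_e : L ^ (1/p) ≤ ENNReal.ofReal C * L1 ^ (1/p₁) * L2 ^ (1/p₂) * L3 ^ (1/p₃) := by
    calc L ^ (1/p) ≤ L1 ^ (1/p₁) * GS ^ (1/s) := step1
      _ ≤ L1 ^ (1/p₁) * (ENNReal.ofReal C * (L2 ^ (1/p₂) * L3 ^ (1/p₃))) := by
          exact mul_le_mul_right (step2'.trans (mul_le_mul_right step3 _)) _
      _ = ENNReal.ofReal C * L1 ^ (1/p₁) * L2 ^ (1/p₂) * L3 ^ (1/p₃) := by ring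
  -- finiteness and real-number conversions
  have hL1eq : L1 = ∫⁻ r in Ioi (0:ℝ), ENNReal.ofReal (|q₁ r| ^ p₁ * r) := by
    rw [hL1def]
    refine setLIntegral_congr_fun measurableSet_Ioi (fun r hr => ?_)
    simp only [hQ₁def]
    rw [ENNReal.ofReal_rpow_of_nonneg (abs_nonneg _) hp₁0.le,
      ← ENNReal.ofReal_mul (Real.rpow_nonneg (abs_nonneg _) _)]
  have hL2eq : L2 = ∫⁻ r in Ioi (0:ℝ), ENNReal.ofReal (|q₂ r| ^ p₂ * r) := by
    rw [hL2def]
    refine setLIntegral_congr_fun measurableSet_Ioi (fun r hr => ?_)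
    simp only [hQ₂def]
    rw [ENNReal.ofReal_rpow_of_nonneg (abs_nonneg _) hp₂0.le,
      ← ENNReal.ofReal_mul (Real.rpow_nonneg (abs_nonneg _) _)]
  have hL3eq : L3 = ∫⁻ r in Ioi (0:ℝ), ENNReal.ofReal (|q₃ r| ^ p₃ * r) := by
    rw [hL3def]
    refine setLIntegral_congr_fun measurableSet_Ioi (fun r hr => ?_)
    simp only [hQ₃def]
    rw [ENNReal.ofReal_rpow_of_nonneg (abs_nonneg _) hp₃0.le,
      ← ENNReal.ofReal_mul (Real.rpow_nonneg (abs_nonneg _) _)]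
  have hfin1 : L1 ≠ ⊤ := by rw [hL1eq]; exact hi1.lintegral_lt_top.ne
  have hfin2 : L2 ≠ ⊤ := by rw [hL2eq]; exact hi2.lintegral_lt_top.ne
  have hfin3 : L3 ≠ ⊤ := by rw [hL3eq]; exact hi3.lintegral_lt_top.ne
  have hR1 : ∫ r in Ioi (0:ℝ), |q₁ r| ^ p₁ * r = L1.toReal := by
    rw [hL1eq]
    exact integral_eq_toReal ((hm1.abs.pow_const p₁).mul measurable_id).aestronglyMeasurable
      ((ae_restrict_mem measurableSet_Ioi).mono fun r hr =>
        mul_nonneg (Real.rpow_nonneg (abs_nonneg _) _) (le_of_lt hr))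
  have hR2 : ∫ r in Ioi (0:ℝ), |q₂ r| ^ p₂ * r = L2.toReal := by
    rw [hL2eq]
    exact integral_eq_toReal ((hm2.abs.pow_const p₂).mul measurable_id).aestronglyMeasurable
      ((ae_restrict_mem measurableSet_Ioi).mono fun r hr =>
        mul_nonneg (Real.rpow_nonneg (abs_nonneg _) _) (le_of_lt hr))
  have hR3 : ∫ r in Ioi (0:ℝ), |q₃ r| ^ p₃ * r = L3.toReal := by
    rw [hL3eq]
    exact integral_eq_toReal ((hm3.abs.pow_const p₃).mul measurable_id).aestronglyMeasurable
      ((ae_restrict_mem measurableSet_Ioi).mono fun r hr =>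
        mul_nonneg (Real.rpow_nonneg (abs_nonneg _) _) (le_of_lt hr))
  -- inner integral as a measurable function
  set wJ : ℝ → ℝ≥0∞ := fun r => ∫⁻ ρ in Ioi r, ENNReal.ofReal (|q₂ ρ| * |q₃ ρ| / ρ) with hwJdef
  have hwJanti : Antitone wJ := fun a b hab =>
    lintegral_mono' (Measure.restrict_mono (Ioi_subset_Ioi hab) le_rfl) le_rfl
  set I' : ℝ → ℝ := fun r => (wJ r).toReal with hI'def
  have hI'meas : Measurable I' := hwJanti.measurable.ennreal_toReal
  have hinner_meas : Measurable (fun ρ : ℝ => |q₂ ρ| * |q₃ ρ| / ρ) :=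
    (hm2.abs.mul hm3.abs).div measurable_id
  have hIeq : ∀ r ∈ Ioi (0:ℝ), (∫ ρ in Ioi r, |q₂ ρ| * |q₃ ρ| / ρ) = I' r := by
    intro r hr
    rw [integral_eq_toReal hinner_meas.aestronglyMeasurable
      ((ae_restrict_mem measurableSet_Ioi).mono fun ρ hρ =>
        div_nonneg (mul_nonneg (abs_nonneg _) (abs_nonneg _)) (le_of_lt (lt_trans hr hρ)))]
  have hLHSre : ∫ r in Ioi (0:ℝ), |q₁ r * ∫ ρ in Ioi r, |q₂ ρ| * |q₃ ρ| / ρ| ^ p * r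
      = ∫ r in Ioi (0:ℝ), |q₁ r * I' r| ^ p * r :=
    setIntegral_congr_fun measurableSet_Ioi (fun r hr => by rw [hIeq r hr])
  set Λ : ℝ≥0∞ := ∫⁻ r in Ioi (0:ℝ), ENNReal.ofReal (|q₁ r * I' r| ^ p * r) with hΛdef
  have hRmain : ∫ r in Ioi (0:ℝ), |q₁ r * I' r| ^ p * r = Λ.toReal := by
    rw [hΛdef]
    exact integral_eq_toReal (((hm1.mul hI'meas).abs.pow_const p).mul
        measurable_id).aestronglyMeasurable
      ((ae_restrict_mem measurableSet_Ioi).mono fun r hr =>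
        mul_nonneg (Real.rpow_nonneg (abs_nonneg _) _) (le_of_lt hr))
  have hΛL : Λ ≤ L := by
    rw [hΛdef, hLdef]
    refine lintegral_mono_ae ((ae_restrict_mem measurableSet_Ioi).mono fun r hr => ?_)
    have hr0 : 0 < r := hr
    have habs : |q₁ r * I' r| = |q₁ r| * I' r := by
      rw [abs_mul, abs_of_nonneg (ENNReal.toReal_nonneg : (0:ℝ) ≤ (wJ r).toReal)]
    have hnn : (0:ℝ) ≤ |q₁ r| * I' r :=
      mul_nonneg (abs_nonneg _) ENNReal.toReal_nonneg
    calc ENNReal.ofReal (|q₁ r * I' r| ^ p * r)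
        = (ENNReal.ofReal (|q₁ r| * I' r)) ^ p * ENNReal.ofReal r := by
          rw [habs, ENNReal.ofReal_mul (Real.rpow_nonneg hnn _),
            ← ENNReal.ofReal_rpow_of_nonneg hnn hp0.le]
      _ ≤ (Q₁ r * G r) ^ p * ENNReal.ofReal r := by
          refine mul_le_mul_left (ENNReal.rpow_le_rpow ?_ hp0.le) _
          rw [ENNReal.ofReal_mul (abs_nonneg _)]
          refine mul_le_mul_right ?_ _
          calc ENNReal.ofReal (I' r) ≤ wJ r := ENNReal.ofReal_toReal_le
            _ = G r := by
                rw [hwJdef, hGdef]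
                refine setLIntegral_congr_fun measurableSet_Ioi (fun ρ hρ => ?_)
                have hρ0 : 0 < ρ := lt_trans hr0 hρ
                rw [div_eq_mul_inv,
                  ENNReal.ofReal_mul (mul_nonneg (abs_nonneg _) (abs_nonneg _)),
                  ENNReal.ofReal_mul (abs_nonneg _), ENNReal.ofReal_inv_of_pos hρ0]
  -- conclusion
  have main2 : Λ ^ (1/p) ≤ ENNReal.ofReal C * L1 ^ (1/p₁) * L2 ^ (1/p₂) * L3 ^ (1/p₃) :=
    le_trans (ENNReal.rpow_le_rpow hΛL (by positivity)) main_e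
  have hfinR : ENNReal.ofReal C * L1 ^ (1/p₁) * L2 ^ (1/p₂) * L3 ^ (1/p₃) ≠ ⊤ :=
    ENNReal.mul_ne_top (ENNReal.mul_ne_top (ENNReal.mul_ne_top ENNReal.ofReal_ne_top
        (ENNReal.rpow_ne_top_of_nonneg (by positivity) hfin1))
      (ENNReal.rpow_ne_top_of_nonneg (by positivity) hfin2))
      (ENNReal.rpow_ne_top_of_nonneg (by positivity) hfin3)
  have final := ENNReal.toReal_mono hfinR main2
  rw [ENNReal.toReal_mul, ENNReal.toReal_mul, ENNReal.toReal_mul, ENNReal.toReal_ofReal hC.le,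
    ← ENNReal.toReal_rpow, ← ENNReal.toReal_rpow, ← ENNReal.toReal_rpow,
    ← ENNReal.toReal_rpow] at final
  rw [hLHSre, hRmain, hR1, hR2, hR3]
  exact final
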